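/- Let m ≥ 2, and let w : Fin m → ℝ satisfy w (Fin.last) = 0 and have two coordinates w i, w j that are linearly independent over ℚ. Let g : ℝ → ℝ be any function, and let γ : ℝ → (Fin m → ℝ) be a curve such that for every t, γ has derivative g(γ(t) (Fin.last)) • w at t. If there exists T > 0 such that γ(T) k − γ(0) k is an integer for every index k, then γ is constant. -/

import Mathlib

/-- Zehnder's example in coordinates: let `w : Fin (n+1) → ℝ` (with `n + 1 ≥ 2`)
have vanishing last coordinate and two coordinates linearly independent over `ℚ`.
If a curve `γ : ℝ → (Fin (n+1) → ℝ)` satisfies `γ' t = g (γ t (last)) • w` for some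
function `g`, and if `γ T - γ 0` has all integer components for some `T > 0`, then
`γ` is constant. -/
theorem stmt_2 (n : ℕ) (hn : 1 ≤ n) (w : Fin (n + 1) → ℝ)
    (hlast : w (Fin.last n) = 0)
    (hw : ∃ i j : Fin (n + 1), LinearIndependent ℚ ![w i, w j])
    (g : ℝ → ℝ) (γ : ℝ → (Fin (n + 1) → ℝ))
    (hγ : ∀ t : ℝ, HasDerivAt γ (g (γ t (Fin.last n)) • w) t)
    (hper : ∃ T : ℝ, 0 < T ∧ ∀ k : Fin (n + 1), ∃ m : ℤ, γ T k - γ 0 k = (m : ℝ)) :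
    ∀ t s : ℝ, γ t = γ s := by
  -- the last coordinate is constant
  have hlastconst : ∀ t, γ t (Fin.last n) = γ 0 (Fin.last n) := by
    have hder : ∀ t : ℝ, HasDerivAt (fun s => γ s (Fin.last n)) 0 t := by
      intro t
      have := (ContinuousLinearMap.proj (R := ℝ) (φ := fun _ : Fin (n + 1) => ℝ)
        (Fin.last n)).hasFDerivAt.comp_hasDerivAt t (hγ t)
      simpa [hlast, Function.comp_def] using this
    intro t
    exact is_const_of_deriv_eq_zero (fun s => (hder s).differentiableAt)
      (fun s => (hder s).deriv) t 0
  set c := g (γ 0 (Fin.last n)) with hc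
  have hγ' : ∀ t, HasDerivAt γ (c • w) t := by
    intro t
    have := hγ t
    rwa [hlastconst t] at this
  have key : ∀ t, γ t = γ 0 + t • (c • w) := by
    intro t
    have h1 : ∀ s : ℝ, HasDerivAt (fun u : ℝ => γ u - u • (c • w)) 0 s := by
      intro s
      have h2 : HasDerivAt (fun u : ℝ => u • (c • w)) (c • w) s := by
        simpa using (hasDerivAt_id s).smul_const (c • w)
      have h4 := (hγ' s).sub h2
      simp only [sub_self] at h4
      exact h4
    have h3 := is_const_of_deriv_eq_zero (f := fun u : ℝ => γ u - u • (c • w))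
      (fun s => (h1 s).differentiableAt) (fun s => (h1 s).deriv) t 0
    simp only [zero_smul, sub_zero] at h3
    have : γ t = γ 0 + t • (c • w) := by
      have := h3
      linear_combination (norm := abel) this
    exact this
  -- show c • w = 0
  have hcw : c • w = 0 := by
    by_contra hne
    have hc0 : c ≠ 0 := by
      intro h; apply hne; rw [h, zero_smul]
    obtain ⟨T, hT, hm⟩ := hper
    obtain ⟨i, j, hind⟩ := hw
    obtain ⟨a, ha⟩ := hm i
    obtain ⟨b, hb⟩ := hm j
    have hTi : T * (c * w i) = (a : ℝ) := by
      have := key T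
      rw [this] at ha
      simp [smul_smul] at ha
      linear_combination ha
    have hTj : T * (c * w j) = (b : ℝ) := by
      have := key T
      rw [this] at hb
      simp [smul_smul] at hb
      linear_combination hb
    have hrel : (b : ℚ) • w i + (-(a : ℚ)) • w j = 0 := by
      have : (b : ℝ) * w i - (a : ℝ) * w j = 0 := by
        rw [← hTi, ← hTj]; ring
      push_cast [Rat.smul_def]
      linarith [this]
    have hab := (LinearIndependent.pair_iff.mp hind) _ _ hrel
    have ha0 : (a : ℝ) = 0 := by
      have : (-(a : ℚ)) = 0 := hab.2
      exact_mod_cast (neg_eq_zero.mp (by exact_mod_cast this) : (a : ℚ) = 0)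
    have hwi : w i = 0 := by
      have := hTi
      rw [ha0] at this
      rcases mul_eq_zero.mp this with h | h
      · exact absurd h (ne_of_gt hT)
      · rcases mul_eq_zero.mp h with h | h
        · exact absurd h hc0
        · exact h
    have hb0 : (b : ℝ) = 0 := by exact_mod_cast hab.1
    have hwj : w j = 0 := by
      have := hTj
      rw [hb0] at this
      rcases mul_eq_zero.mp this with h | h
      · exact absurd h (ne_of_gt hT)
      · rcases mul_eq_zero.mp h with h | h
        · exact absurd h hc0
        · exact h
    have : (1 : ℚ) • w i + (0 : ℚ) • w j = 0 := by
      rw [hwi, hwj]; simp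
    have := (LinearIndependent.pair_iff.mp hind) 1 0 this
    exact one_ne_zero this.1
  intro t s
  rw [key t, key s, hcw]
  simp
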